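/- arXiv:1601.00809 — 3 statements merged into one kernel-verified Lean document; each statement's English description precedes it below -/
import Mathlib

section
/- Let (K, K^∨) be a pair of dual reflexive Gorenstein cones of index k with deg^∨ = t_1 + ⋯ + t_k where each t_i ∈ K^∨_(1), and for 1 ≤ i ≤ k set Δ_i = {x ∈ K : ⟨x, t_j⟩ = δ_{ij} for all 1 ≤ j ≤ k}. Then K is exactly the set of all finite nonnegative real linear combinations of elements of Δ_1 ∪ ⋯ ∪ Δ_k. -/
open scoped BigOperators Pointwise

noncomputable section

/-- The standard pairing `⟨x, y⟩ = ∑ i, x i * y i` on `ℝ^d`. -/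
def pairR {d : ℕ} (x y : Fin d → ℝ) : ℝ := ∑ i, x i * y i

/-- A point of `ℝ^d` is a lattice point if all of its coordinates are integers. -/
def IsLatticePoint {d : ℕ} (x : Fin d → ℝ) : Prop := ∀ i, ∃ z : ℤ, x i = (z : ℝ)

/-- The dual cone `K^∨ = {y : ⟨x, y⟩ ≥ 0 for all x ∈ K}`. -/
def dualCone {d : ℕ} (K : Set (Fin d → ℝ)) : Set (Fin d → ℝ) :=
  { y | ∀ x ∈ K, 0 ≤ pairR x y }

/-- A Gorenstein cone with degree element `n` (a lattice point): the set of all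
nonnegative real linear combinations of a finite set of lattice points, each pairing
to `1` with `n`, such that `K ∩ (−K) = {0}` and `span K = ℝ^d`. -/
def IsGorensteinCone {d : ℕ} (K : Set (Fin d → ℝ)) (n : Fin d → ℝ) : Prop :=
  IsLatticePoint n ∧
  (∃ S : Finset (Fin d → ℝ),
      (∀ v ∈ S, IsLatticePoint v ∧ pairR v n = 1) ∧
      K = { x | ∃ c : (Fin d → ℝ) → ℝ, (∀ v, 0 ≤ c v) ∧ x = ∑ v ∈ S, c v • v }) ∧
  K ∩ (-K) = {0} ∧
  Submodule.span ℝ K = ⊤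

/-- `K_(1)`: the lattice points `m ∈ K` with `⟨m, deg^∨⟩ = 1`. -/
def Kone {d : ℕ} (K : Set (Fin d → ℝ)) (degVee : Fin d → ℝ) : Set (Fin d → ℝ) :=
  { m | IsLatticePoint m ∧ m ∈ K ∧ pairR m degVee = 1 }

/-- `K^∨_(1)`: the lattice points `n ∈ K^∨` with `⟨deg, n⟩ = 1`. -/
def KvOne {d : ℕ} (K : Set (Fin d → ℝ)) (deg : Fin d → ℝ) : Set (Fin d → ℝ) :=
  { n | IsLatticePoint n ∧ n ∈ dualCone K ∧ pairR deg n = 1 }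

lemma pairR_sum_right {d k : ℕ} (x : Fin d → ℝ) (t : Fin k → (Fin d → ℝ)) :
    pairR x (∑ i, t i) = ∑ i, pairR x (t i) := by
  simp only [pairR, Finset.sum_apply, Finset.mul_sum]
  exact Finset.sum_comm

lemma pairR_int {d : ℕ} {x y : Fin d → ℝ} (hx : IsLatticePoint x) (hy : IsLatticePoint y) :
    ∃ z : ℤ, pairR x y = (z : ℝ) := by
  choose zx hzx using hx
  choose zy hzy using hy
  refine ⟨∑ i, zx i * zy i, ?_⟩
  simp only [pairR, hzx, hzy]
  push_cast
  ring

lemma one_hot {k : ℕ} {f : Fin k → ℝ} (h0 : ∀ j, 0 ≤ f j) (hz : ∀ j, ∃ z : ℤ, f j = (z : ℝ))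
    (hs : ∑ j, f j = 1) : ∃ i, ∀ j, f j = if i = j then 1 else 0 := by
  choose z hzf using hz
  have hz0 : ∀ j, 0 ≤ z j := fun j => by
    have := h0 j; rw [hzf j] at this; exact_mod_cast this
  have hszs : ∑ j, z j = 1 := by
    have : ((∑ j, z j : ℤ) : ℝ) = 1 := by push_cast; rw [← hs]; exact Finset.sum_congr rfl fun j _ => (hzf j).symm
    exact_mod_cast this
  obtain ⟨i, hi⟩ : ∃ i, z i ≠ 0 := by
    by_contra h
    push_neg at h
    simp [h] at hszs
  have hsplit : z i + ∑ j ∈ Finset.univ.erase i, z j = 1 := by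
    rw [Finset.add_sum_erase _ z (Finset.mem_univ i)]
    exact hszs
  have herase_nonneg : 0 ≤ ∑ j ∈ Finset.univ.erase i, z j :=
    Finset.sum_nonneg fun j _ => hz0 j
  have hone : 1 ≤ z i := by
    have := hz0 i; omega
  have hzi1 : z i = 1 := by omega
  have herase0 : ∑ j ∈ Finset.univ.erase i, z j = 0 := by omega
  have hzeach : ∀ j ∈ Finset.univ.erase i, z j = 0 :=
    (Finset.sum_eq_zero_iff_of_nonneg fun j _ => hz0 j).1 herase0
  refine ⟨i, fun j => ?_⟩
  rw [hzf j]
  by_cases h : i = j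
  · subst h; rw [hzi1]; simp
  · rw [if_neg h, hzeach j (Finset.mem_erase.2 ⟨Ne.symm h, Finset.mem_univ j⟩)]
    simp

/-- If `(K, K^∨)` is a pair of dual reflexive Gorenstein cones of index `k`
with `deg^∨ = t_1 + ⋯ + t_k`, `t_i ∈ K^∨_(1)`, and `Δ_i = {x ∈ K : ⟨x, t_j⟩ = δ_{ij}}`,
then `K` is exactly the set of all finite nonnegative real linear combinations of
elements of `Δ_1 ∪ ⋯ ∪ Δ_k`. -/
theorem stmt0 {d k : ℕ} (K : Set (Fin d → ℝ)) (deg degVee : Fin d → ℝ)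
    (hK : IsGorensteinCone K degVee) (hKv : IsGorensteinCone (dualCone K) deg)
    (hk : pairR deg degVee = (k : ℝ))
    (t : Fin k → (Fin d → ℝ)) (ht : ∀ i, t i ∈ KvOne K deg)
    (hdec : degVee = ∑ i, t i)
    (Δ : Fin k → Set (Fin d → ℝ))
    (hΔ : ∀ i, Δ i = { x | x ∈ K ∧ ∀ j, pairR x (t j) = if i = j then 1 else 0 }) :
    K = { x | ∃ (n : ℕ) (c : Fin n → ℝ) (p : Fin n → (Fin d → ℝ)),
      (∀ a, 0 ≤ c a) ∧ (∀ a, ∃ i, p a ∈ Δ i) ∧ x = ∑ a, c a • p a } := by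
  obtain ⟨hlat, ⟨S, hSprop, hKeq⟩, hpt, hspan⟩ := hK
  have hgenK : ∀ v ∈ S, v ∈ K := by
    intro v hv
    rw [hKeq]
    refine ⟨fun w => if w = v then 1 else 0, fun w => by dsimp only; split <;> norm_num, ?_⟩
    have : ∑ w ∈ S, (if w = v then (1 : ℝ) else 0) • w = v := by
      rw [Finset.sum_eq_single v]
      · simp
      · intro b _ hb; simp [hb]
      · intro h; exact absurd hv h
    exact this.symm
  have hΔgen : ∀ v ∈ S, ∃ i, v ∈ Δ i := by
    intro v hv
    have hvK := hgenK v hv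
    obtain ⟨hvlat, hv1⟩ := hSprop v hv
    have hsum : ∑ j, pairR v (t j) = 1 := by
      rw [← pairR_sum_right, ← hdec, hv1]
    have hnn : ∀ j, 0 ≤ pairR v (t j) := fun j => (ht j).2.1 v hvK
    have hint : ∀ j, ∃ z : ℤ, pairR v (t j) = (z : ℝ) := fun j => pairR_int hvlat (ht j).1
    obtain ⟨i, hi⟩ := one_hot hnn hint hsum
    exact ⟨i, by rw [hΔ i]; exact ⟨hvK, hi⟩⟩
  ext x
  constructor
  · intro hx
    rw [hKeq] at hx
    obtain ⟨c, hc0, hxe⟩ := hx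
    set e : S ≃ Fin S.card := S.equivFin with he
    refine ⟨S.card, fun a => c (e.symm a), fun a => (e.symm a : Fin d → ℝ),
      fun a => hc0 _, fun a => hΔgen _ (e.symm a).2, ?_⟩
    rw [hxe, ← Finset.sum_coe_sort S (fun v => c v • v)]
    exact (Equiv.sum_comp e.symm (fun v : S => c (v : Fin d → ℝ) • (v : Fin d → ℝ))).symm
  · rintro ⟨n, c, p, hc0, hpΔ, hxe⟩
    have hpK : ∀ a, p a ∈ K := fun a => by
      obtain ⟨i, hi⟩ := hpΔ a
      rw [hΔ i] at hi
      exact hi.1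
    have hrep : ∀ a, ∃ cc : (Fin d → ℝ) → ℝ, (∀ v, 0 ≤ cc v) ∧ p a = ∑ v ∈ S, cc v • v := by
      intro a
      have := hpK a
      rw [hKeq] at this
      exact this
    choose cc hcc0 hccp using hrep
    rw [hKeq]
    refine ⟨fun v => ∑ a, c a * cc a v,
      fun v => Finset.sum_nonneg fun a _ => mul_nonneg (hc0 a) (hcc0 a v), ?_⟩
    rw [hxe]
    calc ∑ a, c a • p a = ∑ a, ∑ v ∈ S, (c a * cc a v) • v := by
          refine Finset.sum_congr rfl fun a _ => ?_
          rw [hccp a, Finset.smul_sum]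
          simp [smul_smul]
      _ = ∑ v ∈ S, (∑ a, c a * cc a v) • v := by
          rw [Finset.sum_comm]
          simp [Finset.sum_smul]
end
end

section
/- Let (K, K^∨) be a pair of dual reflexive Gorenstein cones of index k with deg^∨ = t_1 + ⋯ + t_k where each t_i ∈ K^∨_(1), and for 1 ≤ i ≤ k set Δ_i = {x ∈ K : ⟨x, t_j⟩ = δ_{ij} for all 1 ≤ j ≤ k}. If v ∈ K and α_i = ⟨v, t_i⟩ for each i, then there exist points x_i ∈ Δ_i, one for each index i with α_i > 0, such that v = ∑_{i : α_i > 0} α_i x_i. -/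
open scoped BigOperators Pointwise

noncomputable section

lemma pairR_sum_left {d : ℕ} {ι : Type*} (A : Finset ι) (f : ι → Fin d → ℝ) (y : Fin d → ℝ) :
    pairR (∑ a ∈ A, f a) y = ∑ a ∈ A, pairR (f a) y := by
  simp only [pairR, Finset.sum_apply, Finset.sum_mul]
  exact Finset.sum_comm

lemma pairR_sum_right_s1 {d : ℕ} {ι : Type*} (A : Finset ι) (x : Fin d → ℝ) (f : ι → Fin d → ℝ) :
    pairR x (∑ a ∈ A, f a) = ∑ a ∈ A, pairR x (f a) := by
  simp only [pairR, Finset.sum_apply, Finset.mul_sum]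
  exact Finset.sum_comm

lemma pairR_smul_left {d : ℕ} (a : ℝ) (x y : Fin d → ℝ) :
    pairR (a • x) y = a * pairR x y := by
  simp [pairR, Finset.mul_sum, mul_assoc]

lemma nat_sum_one {k : ℕ} (g : Fin k → ℕ) (h : ∑ j, g j = 1) :
    ∃ i, ∀ j, g j = if i = j then 1 else 0 := by
  obtain ⟨i, -, hi⟩ := Finset.exists_ne_zero_of_sum_ne_zero (by rw [h]; norm_num)
  have h1 : g i ≤ 1 := h ▸ Finset.single_le_sum (fun _ _ => Nat.zero_le _) (Finset.mem_univ i)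
  have hgi : g i = 1 := le_antisymm h1 (Nat.one_le_iff_ne_zero.mpr hi)
  have herase : ∑ j ∈ Finset.univ.erase i, g j = 0 := by
    have := Finset.sum_erase_add Finset.univ g (Finset.mem_univ i)
    omega
  refine ⟨i, fun j => ?_⟩
  by_cases hij : i = j
  · simp [hij ▸ hgi, hij]
  · have : g j = 0 := (Finset.sum_eq_zero_iff).mp herase j
      (Finset.mem_erase.mpr ⟨fun hji => hij hji.symm, Finset.mem_univ j⟩)
    simp [this, hij]

/-- With `deg^∨ = t_1 + ⋯ + t_k` and `Δ_i = {x ∈ K : ⟨x, t_j⟩ = δ_{ij}}`,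
if `v ∈ K` and `α_i = ⟨v, t_i⟩`, then there are points `x_i ∈ Δ_i`, one for each `i`
with `α_i > 0`, such that `v = ∑_{i : α_i > 0} α_i x_i`. -/
theorem stmt1 {d k : ℕ} (K : Set (Fin d → ℝ)) (deg degVee : Fin d → ℝ)
    (hK : IsGorensteinCone K degVee) (hKv : IsGorensteinCone (dualCone K) deg)
    (hk : pairR deg degVee = (k : ℝ))
    (t : Fin k → (Fin d → ℝ)) (ht : ∀ i, t i ∈ KvOne K deg)
    (hdec : degVee = ∑ i, t i)
    (Δ : Fin k → Set (Fin d → ℝ))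
    (hΔ : ∀ i, Δ i = { x | x ∈ K ∧ ∀ j, pairR x (t j) = if i = j then 1 else 0 })
    (v : Fin d → ℝ) (hv : v ∈ K)
    (α : Fin k → ℝ) (hα : ∀ i, α i = pairR v (t i)) :
    ∃ x : Fin k → (Fin d → ℝ),
      (∀ i, 0 < α i → x i ∈ Δ i) ∧
      v = ∑ i ∈ Finset.univ.filter (fun i => 0 < α i), α i • x i := by
  classical
  obtain ⟨hlatDV, ⟨S, hS, hKeq⟩, hpt, hspan⟩ := hK
  -- generators belong to K
  have hSK : ∀ s ∈ S, s ∈ K := by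
    intro s hs
    rw [hKeq]
    refine ⟨fun w => if w = s then 1 else 0, fun w => by dsimp only; split <;> norm_num, ?_⟩
    rw [Finset.sum_eq_single s (fun w _ hne => by simp [hne]) (fun h => absurd hs h)]
    simp
  -- each generator pairs with each t j to a natural number, and these sum to 1
  have hsel : ∀ s : {x // x ∈ S}, ∃ i : Fin k,
      ∀ j, pairR s.1 (t j) = if i = j then 1 else 0 := by
    rintro ⟨s, hs⟩
    have hsK := hSK s hs
    have hlat := (hS s hs).1
    have hone := (hS s hs).2
    have hnat : ∀ j, ∃ n : ℕ, pairR s (t j) = (n : ℝ) := by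
      intro j
      obtain ⟨za, ha⟩ := Classical.axiomOfChoice hlat
      obtain ⟨zb, hb⟩ := Classical.axiomOfChoice (ht j).1
      have hint : pairR s (t j) = ((∑ i, za i * zb i : ℤ) : ℝ) := by
        push_cast [pairR, ha, hb]
        rfl
      have hnn : 0 ≤ pairR s (t j) := (ht j).2.1 s hsK
      have hz : 0 ≤ (∑ i, za i * zb i : ℤ) := by exact_mod_cast hint ▸ hnn
      refine ⟨(∑ i, za i * zb i).toNat, ?_⟩
      rw [hint]
      exact_mod_cast (congrArg (fun z : ℤ => (z : ℝ)) (Int.toNat_of_nonneg hz)).symm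
    choose g hg using hnat
    have hsum : ∑ j, g j = 1 := by
      have : (↑(∑ j, g j) : ℝ) = 1 := by
        push_cast
        simp_rw [← hg]
        rw [← pairR_sum_right_s1, ← hdec, hone]
      exact_mod_cast this
    obtain ⟨i, hi⟩ := nat_sum_one g hsum
    refine ⟨i, fun j => ?_⟩
    rw [hg j, hi j]
    split <;> norm_num
  choose ι hι using hsel
  rw [hKeq] at hv
  obtain ⟨c, hc0, hcv⟩ := hv
  have hv' : v = ∑ s ∈ S.attach, c s.1 • s.1 := by
    rw [hcv, ← Finset.sum_attach S (fun w => c w • w)]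
  set fib : Fin k → Finset {x // x ∈ S} := fun i => S.attach.filter (fun s => ι s = i) with hfib
  -- α i equals the sum of coefficients over the fiber
  have hαβ : ∀ i, α i = ∑ s ∈ fib i, c s.1 := by
    intro i
    rw [hα i, hv', pairR_sum_left]
    simp_rw [pairR_smul_left]
    rw [Finset.sum_filter]
    refine Finset.sum_congr rfl fun s _ => ?_
    rw [hι s i]
    by_cases h : ι s = i
    · simp [h]
    · simp [h, fun hh : i = ι s => h hh.symm]
  have hα0 : ∀ i, 0 ≤ α i := fun i =>
    (hαβ i) ▸ Finset.sum_nonneg (fun s _ => hc0 s.1)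
  set F : Fin k → (Fin d → ℝ) := fun i => ∑ s ∈ fib i, c s.1 • s.1 with hF
  have hvF : v = ∑ i, F i := by
    rw [hv', ← Finset.sum_fiberwise S.attach ι (fun s => c s.1 • s.1)]
  have hFzero : ∀ i, ¬ 0 < α i → F i = 0 := by
    intro i hnot
    have hzero : α i = 0 := le_antisymm (not_lt.mp hnot) (hα0 i)
    have := (Finset.sum_eq_zero_iff_of_nonneg (fun s _ => hc0 s.1)).mp
      ((hαβ i).symm.trans hzero)
    exact Finset.sum_eq_zero fun s hs => by rw [this s hs, zero_smul]
  refine ⟨fun i => (α i)⁻¹ • F i, ?_, ?_⟩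
  · intro i hpos
    have hne : α i ≠ 0 := ne_of_gt hpos
    rw [hΔ i]
    constructor
    · -- membership in K
      rw [hKeq]
      refine ⟨fun w => if h : w ∈ S then (if ι ⟨w, h⟩ = i then (α i)⁻¹ * c w else 0) else 0,
        fun w => ?_, ?_⟩
      · dsimp only
        split
        · split
          · exact mul_nonneg (inv_nonneg.mpr hpos.le) (hc0 w)
          · exact le_refl 0
        · exact le_refl 0
      · show (α i)⁻¹ • F i = _
        rw [← Finset.sum_attach S
          (fun w => (if h : w ∈ S then (if ι ⟨w, h⟩ = i then (α i)⁻¹ * c w else 0) else 0) • w)]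
        rw [hF, Finset.smul_sum, hfib, Finset.sum_filter]
        refine Finset.sum_congr rfl fun s _ => ?_
        rw [dif_pos s.2]
        simp only [Subtype.coe_eta]
        split_ifs with h
        · rw [mul_smul]
        · rw [zero_smul]
    · -- pairing conditions
      intro j
      show pairR ((α i)⁻¹ • F i) (t j) = _
      rw [pairR_smul_left]
      have hFt : pairR (F i) (t j) = if i = j then α i else 0 := by
        rw [hF, pairR_sum_left]
        simp_rw [pairR_smul_left]
        by_cases hij : i = j
        · subst hij
          rw [if_pos rfl, hαβ i]
          refine Finset.sum_congr rfl fun s hs => ?_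
          rw [hι s i, if_pos (Finset.mem_filter.mp hs).2, mul_one]
        · rw [if_neg hij]
          refine Finset.sum_eq_zero fun s hs => ?_
          rw [hι s j, if_neg, mul_zero]
          intro h
          exact hij ((Finset.mem_filter.mp hs).2.symm.trans h)
      rw [hFt]
      by_cases hij : i = j
      · subst hij
        rw [if_pos rfl, if_pos rfl, inv_mul_cancel₀ hne]
      · rw [if_neg hij, if_neg hij, mul_zero]
  · show v = ∑ i ∈ Finset.univ.filter (fun i => 0 < α i), α i • ((α i)⁻¹ • F i)
    rw [hvF, ← Finset.sum_filter_add_sum_filter_not Finset.univ (fun i => 0 < α i) F]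
    have h2 : ∑ i ∈ Finset.univ.filter (fun i => ¬ 0 < α i), F i = 0 :=
      Finset.sum_eq_zero fun i hi => hFzero i (Finset.mem_filter.mp hi).2
    rw [h2, add_zero]
    refine Finset.sum_congr rfl fun i hi => ?_
    have hne : α i ≠ 0 := ne_of_gt (Finset.mem_filter.mp hi).2
    rw [smul_smul, mul_inv_cancel₀ hne, one_smul]
end
end

section
/- Let (K, K^∨) be a pair of dual reflexive Gorenstein cones of index k with deg^∨ = (1/2)(s_1 + ⋯ + s_{2r}) + t_1 + ⋯ + t_{k−r}, where the s_i, t_j ∈ K^∨_(1) are linearly independent, and let T = {x ∈ K : ⟨x, s_i⟩ = 1 and ⟨x, t_j⟩ = 1 for all i, j} − deg (the translate by −deg). Then T = {x ∈ ℝ^d : ⟨x, s_i⟩ = 0 for all i, ⟨x, t_j⟩ = 0 for all j, and ⟨x, n⟩ ≥ −1 for every n ∈ K^∨_(1)}. (That is, T is the dual polytope of the image Θ of the convex hull of K^∨_(1) in the quotient by the span of the s_i and t_j.) -/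
open scoped BigOperators Pointwise

noncomputable section

namespace Stmt14Aux

open Finset Filter Topology

lemma pairR_comm {d : ℕ} (x y : Fin d → ℝ) : pairR x y = pairR y x :=
  Finset.sum_congr rfl fun i _ => mul_comm _ _

lemma pairR_add_left {d : ℕ} (x y z : Fin d → ℝ) :
    pairR (x + y) z = pairR x z + pairR y z := by
  simp [pairR, ← Finset.sum_add_distrib, add_mul]

lemma pairR_sub_left {d : ℕ} (x y z : Fin d → ℝ) :
    pairR (x - y) z = pairR x z - pairR y z := by
  simp [pairR, ← Finset.sum_sub_distrib, sub_mul]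

lemma pairR_sum_smul_left {d : ℕ} {α : Type*} (S : Finset α) (c : α → ℝ)
    (f : α → Fin d → ℝ) (z : Fin d → ℝ) :
    pairR (∑ v ∈ S, c v • f v) z = ∑ v ∈ S, c v * pairR (f v) z := by
  simp only [pairR, Finset.sum_apply, Pi.smul_apply, smul_eq_mul, Finset.mul_sum,
    Finset.sum_mul]
  rw [Finset.sum_comm]
  exact Finset.sum_congr rfl fun v _ => Finset.sum_congr rfl fun i _ => by ring

lemma pairR_continuous_left {d : ℕ} (z : Fin d → ℝ) :
    Continuous fun x : Fin d → ℝ => pairR x z :=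
  continuous_finset_sum _ fun i _ => (continuous_apply i).mul continuous_const

/-- The cone generated by `S`. -/
def gen {d : ℕ} (S : Finset (Fin d → ℝ)) : Set (Fin d → ℝ) :=
  { x | ∃ c : (Fin d → ℝ) → ℝ, (∀ v, 0 ≤ c v) ∧ x = ∑ v ∈ S, c v • v }

lemma zero_mem_gen {d : ℕ} (S : Finset (Fin d → ℝ)) : (0 : Fin d → ℝ) ∈ gen S :=
  ⟨0, fun _ => le_rfl, by simp⟩

lemma mem_gen_of_mem {d : ℕ} {S : Finset (Fin d → ℝ)} {v : Fin d → ℝ} (hv : v ∈ S) :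
    v ∈ gen S := by
  classical
  refine ⟨fun w => if w = v then 1 else 0, fun w => by by_cases h : w = v <;> simp [h], ?_⟩
  have h : ∀ w ∈ S, (if w = v then (1:ℝ) else 0) • w = if w = v then w else 0 :=
    fun w _ => by split <;> simp
  rw [Finset.sum_congr rfl h, Finset.sum_ite_eq' S v (fun w => w), if_pos hv]

lemma convex_gen {d : ℕ} (S : Finset (Fin d → ℝ)) : Convex ℝ (gen S) := by
  rintro x ⟨c, hc, rfl⟩ y ⟨c', hc', rfl⟩ a b ha hb _
  refine ⟨fun v => a * c v + b * c' v,
    fun v => add_nonneg (mul_nonneg ha (hc v)) (mul_nonneg hb (hc' v)), ?_⟩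
  rw [Finset.smul_sum, Finset.smul_sum, ← Finset.sum_add_distrib]
  exact Finset.sum_congr rfl fun v _ => by
    simp [smul_smul, add_smul]

lemma smul_mem_gen {d : ℕ} {S : Finset (Fin d → ℝ)} {z : Fin d → ℝ} (hz : z ∈ gen S)
    {a : ℝ} (ha : 0 ≤ a) : a • z ∈ gen S := by
  obtain ⟨c, hc, rfl⟩ := hz
  refine ⟨fun v => a * c v, fun v => mul_nonneg ha (hc v), ?_⟩
  rw [Finset.smul_sum]
  exact Finset.sum_congr rfl fun v _ => by simp [smul_smul]

lemma isClosed_gen {d : ℕ} (S : Finset (Fin d → ℝ)) (n : Fin d → ℝ)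
    (hSn : ∀ v ∈ S, pairR v n = 1) : IsClosed (gen S) := by
  classical
  apply IsSeqClosed.isClosed
  intro x x₀ hx hlim
  choose c hc0 hcx using hx
  set b : ℕ → {v // v ∈ S} → ℝ := fun m v => c m v.1 with hb
  have hr : Tendsto (fun m => pairR (x m) n) atTop (𝓝 (pairR x₀ n)) :=
    ((pairR_continuous_left n).tendsto x₀).comp hlim
  obtain ⟨M, hM⟩ := hr.bddAbove_range
  have key : ∀ m v, v ∈ S → c m v ≤ pairR (x m) n := by
    intro m v hv
    have h1 : pairR (x m) n = ∑ w ∈ S, c m w := by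
      rw [hcx m, pairR_sum_smul_left]
      exact Finset.sum_congr rfl fun w hw => by rw [hSn w hw, mul_one]
    rw [h1]
    exact Finset.single_le_sum (fun w _ => hc0 m w) hv
  have hbmem : ∀ m, b m ∈ Set.Icc (0 : {v // v ∈ S} → ℝ) (fun _ => M) := by
    intro m
    constructor
    · intro v; exact hc0 m v.1
    · intro v; exact (key m v.1 v.2).trans (hM ⟨m, rfl⟩)
  obtain ⟨b₀, hb₀mem, φ, hφ, hbt⟩ := isCompact_Icc.tendsto_subseq hbmem
  refine ⟨fun w => if h : w ∈ S then b₀ ⟨w, h⟩ else 0, ?_, ?_⟩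
  · intro w
    by_cases h : w ∈ S
    · simpa [h] using hb₀mem.1 ⟨w, h⟩
    · simp [h]
  · have hg : Continuous fun (b : {v // v ∈ S} → ℝ) =>
        ∑ v ∈ S.attach, b v • (v : Fin d → ℝ) :=
      continuous_finset_sum _ fun v _ => (continuous_apply v).smul continuous_const
    have h1 : Tendsto (fun k => x (φ k)) atTop (𝓝 x₀) := hlim.comp hφ.tendsto_atTop
    have h2 : Tendsto (fun k => ∑ v ∈ S.attach, b (φ k) v • (v : Fin d → ℝ)) atTop
        (𝓝 (∑ v ∈ S.attach, b₀ v • (v : Fin d → ℝ))) := (hg.tendsto b₀).comp hbt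
    have heq : (fun k => x (φ k)) = fun k => ∑ v ∈ S.attach, b (φ k) v • (v : Fin d → ℝ) := by
      funext k
      rw [hcx (φ k), ← Finset.sum_attach S (fun v => c (φ k) v • v)]
    rw [heq] at h1
    have hx₀ : x₀ = ∑ v ∈ S.attach, b₀ v • (v : Fin d → ℝ) := tendsto_nhds_unique h1 h2
    rw [hx₀, ← Finset.sum_attach S
      (fun w => (if h : w ∈ S then b₀ ⟨w, h⟩ else 0) • w)]
    exact Finset.sum_congr rfl fun v _ => by rw [dif_pos v.2]

/-- Biduality: if `x` pairs nonnegatively with everything in the dual cone of `gen S`,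
then `x ∈ gen S`. -/
lemma mem_gen_of_dual {d : ℕ} (S : Finset (Fin d → ℝ)) (n : Fin d → ℝ)
    (hSn : ∀ v ∈ S, pairR v n = 1) (x : Fin d → ℝ)
    (hx : ∀ m ∈ dualCone (gen S), 0 ≤ pairR x m) : x ∈ gen S := by
  classical
  by_contra hxK
  obtain ⟨f, u, hfx, hfb⟩ :=
    geometric_hahn_banach_point_closed (convex_gen S) (isClosed_gen S n hSn) hxK
  have hu0 : u < 0 := by simpa using hfb 0 (zero_mem_gen S)
  set m : Fin d → ℝ := fun i => f (fun j => if i = j then 1 else 0) with hm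
  have hfm : ∀ z : Fin d → ℝ, f z = pairR z m := by
    intro z
    conv_lhs => rw [pi_eq_sum_univ z]
    rw [map_sum]
    exact Finset.sum_congr rfl fun i _ => by rw [map_smul]; rfl
  have hfnonneg : ∀ z ∈ gen S, 0 ≤ f z := by
    intro z hz
    by_contra h
    push_neg at h
    have hc : (0:ℝ) < u / f z + 1 := by
      have : 0 < u / f z := div_pos_of_neg_of_neg hu0 h
      linarith
    have := hfb _ (smul_mem_gen hz hc.le)
    rw [map_smul, smul_eq_mul, add_mul, div_mul_cancel₀ _ (ne_of_lt h), one_mul] at this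
    linarith
  have hmdual : m ∈ dualCone (gen S) := fun z hz => by
    rw [← hfm z]; exact hfnonneg z hz
  have := hx m hmdual
  rw [← hfm x] at this
  linarith

end Stmt14Aux

/-- Suppose `deg^∨ = (1/2)(s_1 + ⋯ + s_{2r}) + t_1 + ⋯ + t_{k−r}` with
the `s_i, t_j ∈ K^∨_(1)` linearly independent, and let
`T = {x ∈ K : ⟨x, s_i⟩ = ⟨x, t_j⟩ = 1 ∀ i, j} − deg`. Then
`T = {x : ⟨x, s_i⟩ = 0 ∀ i, ⟨x, t_j⟩ = 0 ∀ j, and ⟨x, n⟩ ≥ −1 ∀ n ∈ K^∨_(1)}`. -/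
theorem stmt14 {d k r : ℕ} (hrk : r ≤ k) (K : Set (Fin d → ℝ)) (deg degVee : Fin d → ℝ)
    (hK : IsGorensteinCone K degVee) (hKv : IsGorensteinCone (dualCone K) deg)
    (hk : pairR deg degVee = (k : ℝ))
    (s : Fin (2 * r) → (Fin d → ℝ)) (t : Fin (k - r) → (Fin d → ℝ))
    (hs : ∀ i, s i ∈ KvOne K deg) (ht : ∀ j, t j ∈ KvOne K deg)
    (hli : LinearIndependent ℝ (Sum.elim s t))
    (hdec : degVee = (2⁻¹ : ℝ) • (∑ i, s i) + ∑ j, t j)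
    (T : Set (Fin d → ℝ))
    (hT : T = (fun x => x - deg) ''
      { x | x ∈ K ∧ (∀ i, pairR x (s i) = 1) ∧ (∀ j, pairR x (t j) = 1) }) :
    T = { x | (∀ i, pairR x (s i) = 0) ∧ (∀ j, pairR x (t j) = 0) ∧
          ∀ n ∈ KvOne K deg, -1 ≤ pairR x n } := by
  classical
  obtain ⟨-, ⟨S, hSprop, hKeq⟩, -, -⟩ := hK
  obtain ⟨-, ⟨S', hS'prop, hKveq⟩, -, -⟩ := hKv
  ext y
  constructor
  · intro hy
    rw [hT] at hy
    obtain ⟨x, ⟨hxK, hxs, hxt⟩, rfl⟩ := hy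
    refine ⟨fun i => ?_, fun j => ?_, fun n hn => ?_⟩
    · rw [Stmt14Aux.pairR_sub_left, hxs i, (hs i).2.2]; ring
    · rw [Stmt14Aux.pairR_sub_left, hxt j, (ht j).2.2]; ring
    · rw [Stmt14Aux.pairR_sub_left, hn.2.2]
      have := hn.2.1 x hxK
      linarith
  · rintro ⟨hys, hyt, hyn⟩
    have hxdual : ∀ n ∈ dualCone K, 0 ≤ pairR (y + deg) n := by
      intro n hn
      rw [hKveq] at hn
      obtain ⟨c, hc0, rfl⟩ := hn
      have hsum : pairR (y + deg) (∑ v ∈ S', c v • v)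
          = ∑ v ∈ S', c v * pairR (y + deg) v := by
        rw [Stmt14Aux.pairR_comm, Stmt14Aux.pairR_sum_smul_left]
        exact Finset.sum_congr rfl fun v _ => by rw [Stmt14Aux.pairR_comm]
      rw [hsum]
      refine Finset.sum_nonneg fun v hv => mul_nonneg (hc0 v) ?_
      have hvK : v ∈ KvOne K deg := by
        refine ⟨(hS'prop v hv).1, ?_, ?_⟩
        · rw [hKveq]; exact Stmt14Aux.mem_gen_of_mem hv
        · rw [Stmt14Aux.pairR_comm]; exact (hS'prop v hv).2
      have h1 := hyn v hvK
      have h2 : pairR deg v = 1 := hvK.2.2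
      rw [Stmt14Aux.pairR_add_left]
      linarith
    have hxK : (y + deg) ∈ K := by
      rw [hKeq]
      refine Stmt14Aux.mem_gen_of_dual S degVee (fun v hv => (hSprop v hv).2) _ ?_
      intro m hm
      refine hxdual m ?_
      rw [hKeq]; exact hm
    rw [hT]
    refine ⟨y + deg, ⟨hxK, fun i => ?_, fun j => ?_⟩, add_sub_cancel_right y deg⟩
    · rw [Stmt14Aux.pairR_add_left, hys i, (hs i).2.2]; ring
    · rw [Stmt14Aux.pairR_add_left, hyt j, (ht j).2.2]; ring
end
end
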